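/- Fix s ∈ (−1/2, 0) and let 𝓕 be a bounded subset of H^s(𝕋). Then 𝓕 is equicontinuous in H^s(𝕋) if and only if sup_{f∈𝓕} ‖f‖_{H^s_κ} → 0 as κ → ∞, where ‖f‖²_{H^s_κ} = Σ_{n∈ℤ} |f̂(n)|² (|n|+κ)^{2s}. -/

import Mathlib

open Real Complex

lemma abs_exp_I_sub_one_sq (n : ℤ) (y : ℝ) :
    ‖Complex.exp (Complex.I * n * y) - 1‖ ^ 2 = 2 - 2 * Real.cos ((n : ℝ) * y) := by
  have h : Complex.I * (n : ℂ) * (y : ℂ) = (((n : ℝ) * y : ℝ) : ℂ) * Complex.I := by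
    push_cast; ring
  rw [h, Complex.sq_norm, Complex.normSq_apply, Complex.sub_re, Complex.sub_im,
    Complex.exp_ofReal_mul_I_re, Complex.exp_ofReal_mul_I_im, Complex.one_re, Complex.one_im]
  nlinarith [Real.sin_sq_add_cos_sq ((n : ℝ) * y)]

lemma term_eq (n : ℤ) (y : ℝ) (c : ℂ) :
    ‖(Complex.exp (Complex.I * n * y) - 1) * c‖ ^ 2
      = (2 - 2 * Real.cos ((n : ℝ) * y)) * ‖c‖ ^ 2 := by
  rw [norm_mul, mul_pow, abs_exp_I_sub_one_sq]

lemma two_sub_two_cos_le (θ : ℝ) : 2 - 2 * Real.cos θ ≤ θ ^ 2 := by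
  have h1 : Real.sin (θ / 2) ^ 2 ≤ (θ / 2) ^ 2 := Real.sin_sq_le_sq
  have h2 := Real.sin_sq_add_cos_sq (θ / 2)
  have h3 : Real.cos θ = 2 * Real.cos (θ / 2) ^ 2 - 1 := by
    rw [← Real.cos_two_mul]; ring_nf
  nlinarith

lemma two_sub_two_cos_nonneg (θ : ℝ) : 0 ≤ 2 - 2 * Real.cos θ := by
  have := Real.cos_le_one θ; linarith

lemma two_sub_two_cos_le_four (θ : ℝ) : 2 - 2 * Real.cos θ ≤ 4 := by
  have := Real.neg_one_le_cos θ; linarith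

lemma integral_lower (a : ℝ) (ha : 0 < a) (n : ℤ) (hn : 2 ≤ a * |(n : ℝ)|) :
    2 * a ≤ ∫ y in (-a)..a, (2 - 2 * Real.cos ((n : ℝ) * y)) := by
  have hn0 : (n : ℝ) ≠ 0 := by
    intro h; rw [h] at hn; simp at hn; linarith
  have hcont : Continuous fun y : ℝ => Real.cos ((n : ℝ) * y) :=
    Real.continuous_cos.comp (continuous_const.mul continuous_id)
  have h1 : ∫ y in (-a)..a, Real.cos ((n : ℝ) * y)
      = ((n : ℝ))⁻¹ * (Real.sin ((n : ℝ) * a) - Real.sin ((n : ℝ) * (-a))) := by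
    rw [intervalIntegral.integral_comp_mul_left Real.cos hn0, integral_cos, smul_eq_mul]
  have hint : ∫ y in (-a)..a, (2 - 2 * Real.cos ((n : ℝ) * y))
      = 4 * a - 2 * (((n : ℝ))⁻¹ * (Real.sin ((n : ℝ) * a) - Real.sin ((n : ℝ) * (-a)))) := by
    rw [intervalIntegral.integral_sub intervalIntegrable_const
      ((hcont.intervalIntegrable _ _).const_mul 2), intervalIntegral.integral_const_mul, h1,
      intervalIntegral.integral_const]
    simp; ring
  rw [hint]
  have hb : ((n : ℝ))⁻¹ * (Real.sin ((n : ℝ) * a) - Real.sin ((n : ℝ) * (-a))) ≤ 2 / |(n : ℝ)| := by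
    calc ((n : ℝ))⁻¹ * (Real.sin ((n : ℝ) * a) - Real.sin ((n : ℝ) * (-a)))
        ≤ |((n : ℝ))⁻¹ * (Real.sin ((n : ℝ) * a) - Real.sin ((n : ℝ) * (-a)))| := le_abs_self _
      _ = |(n : ℝ)|⁻¹ * |Real.sin ((n : ℝ) * a) - Real.sin ((n : ℝ) * (-a))| := by
          rw [abs_mul, abs_inv]
      _ ≤ |(n : ℝ)|⁻¹ * 2 := by
          gcongr
          have h1 := Real.neg_one_le_sin ((n : ℝ) * (-a))
          have h2 := Real.sin_le_one ((n : ℝ) * (-a))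
          have h3 := Real.neg_one_le_sin ((n : ℝ) * a)
          have h4 := Real.sin_le_one ((n : ℝ) * a)
          rw [abs_le]; constructor <;> linarith
      _ = 2 / |(n : ℝ)| := by ring
  have hna : (0:ℝ) < |(n : ℝ)| := abs_pos.mpr hn0
  have h2a : 2 / |(n : ℝ)| ≤ a := by
    rw [div_le_iff₀ hna]; linarith [hn, mul_comm a |(n : ℝ)|]
  linarith

set_option maxHeartbeats 1000000 in
/-- For `s ∈ (-1/2,0)` and a bounded subset `𝓕` of `H^s(𝕋)` (represented by Fourier
coefficient sequences), `𝓕` is equicontinuous iff `sup_{f∈𝓕} ‖f‖_{H^s_κ} → 0` as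
`κ → ∞`. -/
theorem equicontinuous_iff_Hs_kappa (s : ℝ) (hs : s ∈ Set.Ioo (-(1/2) : ℝ) 0)
    (F : Set (ℤ → ℂ)) (B : ℝ)
    (hbdd : ∀ f ∈ F, Summable (fun n : ℤ => ‖f n‖ ^ 2 * (|(n : ℝ)| + 1) ^ (2 * s))
      ∧ (∑' n : ℤ, ‖f n‖ ^ 2 * (|(n : ℝ)| + 1) ^ (2 * s)) ≤ B) :
    (∀ ε > (0 : ℝ), ∃ δ > (0 : ℝ), ∀ f ∈ F, ∀ y : ℝ, |y| < δ →
        Real.sqrt (∑' n : ℤ,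
          ‖(Complex.exp (Complex.I * n * y) - 1) * f n‖ ^ 2
            * (|(n : ℝ)| + 1) ^ (2 * s)) ≤ ε)
    ↔ (∀ ε > (0 : ℝ), ∃ K : ℝ, 1 ≤ K ∧ ∀ κ : ℝ, K ≤ κ → ∀ f ∈ F,
        Real.sqrt (∑' n : ℤ,
          ‖f n‖ ^ 2 * (|(n : ℝ)| + κ) ^ (2 * s)) ≤ ε) := by
  classical
  have h2s : 2 * s < 0 := by nlinarith [hs.2]
  have h2s' : (-1 : ℝ) ≤ 2 * s := by nlinarith [hs.1]
  -- weight
  set w : ℤ → ℝ := fun n => (|(n : ℝ)| + 1) ^ (2 * s) with hw_def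
  have hw_pos : ∀ n : ℤ, 0 < w n := fun n =>
    Real.rpow_pos_of_pos (by positivity) _
  constructor
  · -- equicontinuity → κ-norm smallness
    intro H ε hε
    have hε2 : (0 : ℝ) < ε / 2 := by linarith
    obtain ⟨δ, hδ, H'⟩ := H (ε / 2) hε2
    set a : ℝ := δ / 2 with ha_def
    have ha : 0 < a := by positivity
    set N : ℝ := 2 / a with hN_def
    have hN : 0 < N := by positivity
    set M : ℝ := (N + 1) ^ (-(2 * s)) * |B| + 1 with hM_def
    have hM : 0 < M := by positivity
    set η : ℝ := (ε / 2) ^ 2 / M with hη_def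
    have hη : 0 < η := by positivity
    refine ⟨max 1 (η ^ (2 * s)⁻¹), le_max_left _ _, ?_⟩
    intro κ hκ f hf
    have hsummable : Summable fun n : ℤ => ‖f n‖ ^ 2 * w n := (hbdd f hf).1
    have htsum : (∑' n : ℤ, ‖f n‖ ^ 2 * w n) ≤ B := (hbdd f hf).2
    set t : ℤ → ℝ := fun n => ‖f n‖ ^ 2 * w n with ht_def
    have ht_nonneg : ∀ n, 0 ≤ t n := fun n => by positivity
    have hκ1 : (1 : ℝ) ≤ κ := le_trans (le_max_left _ _) hκ
    have hκ0 : (0 : ℝ) < κ := by linarith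
    -- κ^(2s) is small
    have hκs : κ ^ (2 * s) ≤ η := by
      have h0 : (0 : ℝ) < η ^ (2 * s)⁻¹ := Real.rpow_pos_of_pos hη _
      have h1 : η ^ (2 * s)⁻¹ ≤ κ := le_trans (le_max_right _ _) hκ
      calc κ ^ (2 * s) ≤ (η ^ (2 * s)⁻¹) ^ (2 * s) :=
            Real.rpow_le_rpow_of_nonpos h0 h1 h2s.le
        _ = η := Real.rpow_inv_rpow hη.le h2s.ne
    -- tail estimate via integration
    have htail : ∀ A : Finset ℤ, (∀ n ∈ A, 2 ≤ a * |(n : ℝ)|) →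
        (∑ n ∈ A, t n) ≤ (ε / 2) ^ 2 := by
      intro A hA
      have hsum_cos : ∀ y : ℝ, Summable fun n : ℤ => (2 - 2 * Real.cos ((n : ℝ) * y)) * t n := by
        intro y
        refine Summable.of_nonneg_of_le
          (fun n => mul_nonneg (two_sub_two_cos_nonneg _) (ht_nonneg n))
          (fun n => mul_le_mul_of_nonneg_right (two_sub_two_cos_le_four _) (ht_nonneg n))
          (hsummable.mul_left 4)
      have key : ∀ y : ℝ, |y| < δ →
          (∑' n : ℤ, (2 - 2 * Real.cos ((n : ℝ) * y)) * t n) ≤ (ε / 2) ^ 2 := by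
        intro y hy
        have h1 := H' f hf y hy
        have hrw : (∑' n : ℤ, ‖(Complex.exp (Complex.I * n * y) - 1) * f n‖ ^ 2
            * (|(n : ℝ)| + 1) ^ (2 * s)) = ∑' n : ℤ, (2 - 2 * Real.cos ((n : ℝ) * y)) * t n :=
          tsum_congr fun n => by rw [term_eq]; simp only [ht_def, hw_def]; ring
        rw [hrw] at h1
        set S := ∑' n : ℤ, (2 - 2 * Real.cos ((n : ℝ) * y)) * t n with hS_def
        have hS0 : 0 ≤ S := tsum_nonneg fun n =>
          mul_nonneg (two_sub_two_cos_nonneg _) (ht_nonneg n)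
        calc S = Real.sqrt S ^ 2 := (Real.sq_sqrt hS0).symm
          _ ≤ (ε / 2) ^ 2 := pow_le_pow_left₀ (Real.sqrt_nonneg _) h1 2
      -- integrate
      have hint_each : ∀ n : ℤ, IntervalIntegrable
          (fun y : ℝ => (2 - 2 * Real.cos ((n : ℝ) * y)) * t n) MeasureTheory.volume (-a) a := by
        intro n
        exact ((continuous_const.sub (continuous_const.mul (Real.continuous_cos.comp
          (continuous_const.mul continuous_id)))).mul continuous_const).intervalIntegrable _ _
      have step1 : 2 * a * (∑ n ∈ A, t n)
          ≤ ∑ n ∈ A, (∫ y in (-a)..a, (2 - 2 * Real.cos ((n : ℝ) * y))) * t n := by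
        rw [Finset.mul_sum]
        refine Finset.sum_le_sum fun n hn => ?_
        exact mul_le_mul_of_nonneg_right (integral_lower a ha n (hA n hn)) (ht_nonneg n)
      have step2 : (∑ n ∈ A, (∫ y in (-a)..a, (2 - 2 * Real.cos ((n : ℝ) * y))) * t n)
          = ∫ y in (-a)..a, ∑ n ∈ A, (2 - 2 * Real.cos ((n : ℝ) * y)) * t n := by
        rw [intervalIntegral.integral_finset_sum fun n _ => hint_each n]
        refine Finset.sum_congr rfl fun n _ => ?_
        rw [intervalIntegral.integral_mul_const]
      have step3 : (∫ y in (-a)..a, ∑ n ∈ A, (2 - 2 * Real.cos ((n : ℝ) * y)) * t n)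
          ≤ ∫ _ in (-a)..a, (ε / 2) ^ 2 := by
        have hcontsum : Continuous fun y : ℝ => ∑ n ∈ A, (2 - 2 * Real.cos ((n : ℝ) * y)) * t n :=
          continuous_finset_sum A fun n _ => (continuous_const.sub (continuous_const.mul
            (Real.continuous_cos.comp (continuous_const.mul continuous_id)))).mul continuous_const
        refine intervalIntegral.integral_mono_on (by linarith)
          (hcontsum.intervalIntegrable _ _) intervalIntegrable_const ?_
        intro y hy
        have hyδ : |y| < δ := by
          rw [abs_lt]; constructor <;> [linarith [hy.1]; linarith [hy.2]]
        calc (∑ n ∈ A, (2 - 2 * Real.cos ((n : ℝ) * y)) * t n)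
            ≤ ∑' n : ℤ, (2 - 2 * Real.cos ((n : ℝ) * y)) * t n :=
              Summable.sum_le_tsum A (fun n _ => mul_nonneg (two_sub_two_cos_nonneg _) (ht_nonneg n))
                (hsum_cos y)
          _ ≤ (ε / 2) ^ 2 := key y hyδ
      have step4 : (∫ _ in (-a)..a, (ε / 2) ^ 2 : ℝ) = 2 * a * (ε / 2) ^ 2 := by
        rw [intervalIntegral.integral_const, smul_eq_mul]; ring
      have : 2 * a * (∑ n ∈ A, t n) ≤ 2 * a * (ε / 2) ^ 2 := by
        rw [← step4]; exact le_trans step1 (le_of_eq_of_le step2 step3)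
      exact le_of_mul_le_mul_left this (by positivity)
    -- indicator tail tsum
    set Sset : Set ℤ := {n : ℤ | 2 ≤ a * |(n : ℝ)|} with hSset_def
    have hCsum : Summable (Sset.indicator t) := hsummable.indicator _
    have hC : (∑' n : ℤ, Sset.indicator t n) ≤ (ε / 2) ^ 2 := by
      refine Summable.tsum_le_of_sum_le hCsum fun A => ?_
      have heq : (∑ n ∈ A, Sset.indicator t n)
          = ∑ n ∈ (A.filter fun m : ℤ => 2 ≤ a * |(m : ℝ)|), t n := by
        rw [Finset.sum_filter]
        refine Finset.sum_congr rfl fun n _ => ?_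
        by_cases hn : 2 ≤ a * |(n : ℝ)|
        · rw [Set.indicator_of_mem (show n ∈ Sset from hn) t, if_pos hn]
        · rw [Set.indicator_of_notMem (show n ∉ Sset from hn) t, if_neg hn]
      rw [heq]
      exact htail _ fun n hn => (Finset.mem_filter.mp hn).2
    -- pointwise bound
    have hper : ∀ n : ℤ, ‖f n‖ ^ 2 * (|(n : ℝ)| + κ) ^ (2 * s)
        ≤ κ ^ (2 * s) * (N + 1) ^ (-(2 * s)) * t n + Sset.indicator t n := by
      intro n
      by_cases hn : 2 ≤ a * |(n : ℝ)|
      · have h1 : (|(n : ℝ)| + κ) ^ (2 * s) ≤ (|(n : ℝ)| + 1) ^ (2 * s) :=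
          Real.rpow_le_rpow_of_nonpos (by positivity) (by linarith) h2s.le
        have h2 : Sset.indicator t n = t n := Set.indicator_of_mem (show n ∈ Sset from hn) t
        have h3 : ‖f n‖ ^ 2 * (|(n : ℝ)| + κ) ^ (2 * s) ≤ t n := by
          rw [ht_def]
          exact mul_le_mul_of_nonneg_left h1 (by positivity)
        have h4 : 0 ≤ κ ^ (2 * s) * (N + 1) ^ (-(2 * s)) * t n := by positivity
        linarith
      · have hnN : |(n : ℝ)| ≤ N := by
          rw [hN_def, le_div_iff₀ ha]
          push_neg at hn
          calc |(n : ℝ)| * a = a * |(n : ℝ)| := mul_comm _ _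
            _ ≤ 2 := hn.le
        have e1 : (|(n : ℝ)| + κ) ^ (2 * s) ≤ κ ^ (2 * s) :=
          Real.rpow_le_rpow_of_nonpos hκ0 (by linarith [abs_nonneg ((n : ℝ))]) h2s.le
        have e2 : (1 : ℝ) ≤ (|(n : ℝ)| + 1) ^ (2 * s) * (N + 1) ^ (-(2 * s)) := by
          have e3 : (|(n : ℝ)| + 1) ^ (-(2 * s)) ≤ (N + 1) ^ (-(2 * s)) :=
            Real.rpow_le_rpow (by positivity) (by linarith) (by linarith)
          calc (1 : ℝ) = (|(n : ℝ)| + 1) ^ (2 * s) * (|(n : ℝ)| + 1) ^ (-(2 * s)) := by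
                rw [← Real.rpow_add (by positivity), add_neg_cancel, Real.rpow_zero]
            _ ≤ (|(n : ℝ)| + 1) ^ (2 * s) * (N + 1) ^ (-(2 * s)) :=
                mul_le_mul_of_nonneg_left e3 (Real.rpow_nonneg (by positivity) _)
        have ha1 : ‖f n‖ ^ 2 * (|(n : ℝ)| + κ) ^ (2 * s)
            ≤ ‖f n‖ ^ 2 * κ ^ (2 * s) :=
          mul_le_mul_of_nonneg_left e1 (by positivity)
        have ha2 : ‖f n‖ ^ 2 * κ ^ (2 * s)
            ≤ κ ^ (2 * s) * (N + 1) ^ (-(2 * s)) * t n := by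
          calc ‖f n‖ ^ 2 * κ ^ (2 * s)
              = ‖f n‖ ^ 2 * κ ^ (2 * s) * 1 := by ring
            _ ≤ ‖f n‖ ^ 2 * κ ^ (2 * s)
                * ((|(n : ℝ)| + 1) ^ (2 * s) * (N + 1) ^ (-(2 * s))) :=
                mul_le_mul_of_nonneg_left e2 (by positivity)
            _ = κ ^ (2 * s) * (N + 1) ^ (-(2 * s))
                * (‖f n‖ ^ 2 * (|(n : ℝ)| + 1) ^ (2 * s)) := by ring
            _ = κ ^ (2 * s) * (N + 1) ^ (-(2 * s)) * t n := by rw [ht_def]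
        have ha3 : 0 ≤ Sset.indicator t n := Set.indicator_nonneg (fun m _ => ht_nonneg m) n
        linarith
    -- summability of LHS and RHS
    have hsum_a : Summable fun n : ℤ => ‖f n‖ ^ 2 * (|(n : ℝ)| + κ) ^ (2 * s) := by
      refine Summable.of_nonneg_of_le (fun n => by positivity) (fun n => ?_) hsummable
      exact mul_le_mul_of_nonneg_left
        (Real.rpow_le_rpow_of_nonpos (by positivity) (by linarith) h2s.le) (by positivity)
    have hsum_rhs : Summable fun n : ℤ =>
        κ ^ (2 * s) * (N + 1) ^ (-(2 * s)) * t n + Sset.indicator t n :=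
      (hsummable.mul_left _).add hCsum
    have hfinal : (∑' n : ℤ, ‖f n‖ ^ 2 * (|(n : ℝ)| + κ) ^ (2 * s)) ≤ ε ^ 2 := by
      have hb1 : (∑' n : ℤ, ‖f n‖ ^ 2 * (|(n : ℝ)| + κ) ^ (2 * s))
          ≤ ∑' n : ℤ, (κ ^ (2 * s) * (N + 1) ^ (-(2 * s)) * t n + Sset.indicator t n) :=
        Summable.tsum_le_tsum hper hsum_a hsum_rhs
      have hb2 : (∑' n : ℤ, (κ ^ (2 * s) * (N + 1) ^ (-(2 * s)) * t n + Sset.indicator t n))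
          = κ ^ (2 * s) * (N + 1) ^ (-(2 * s)) * (∑' n, t n) + ∑' n, Sset.indicator t n := by
        rw [Summable.tsum_add (hsummable.mul_left _) hCsum, tsum_mul_left]
      have hb3 : κ ^ (2 * s) * (N + 1) ^ (-(2 * s)) * (∑' n, t n) ≤ (ε / 2) ^ 2 := by
        have hc1 : κ ^ (2 * s) * (N + 1) ^ (-(2 * s)) * (∑' n, t n)
            ≤ κ ^ (2 * s) * (N + 1) ^ (-(2 * s)) * |B| := by
          refine mul_le_mul_of_nonneg_left (le_trans htsum (le_abs_self B)) (by positivity)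
        have hc2 : κ ^ (2 * s) * ((N + 1) ^ (-(2 * s)) * |B|) ≤ κ ^ (2 * s) * M := by
          refine mul_le_mul_of_nonneg_left ?_ (Real.rpow_nonneg hκ0.le _)
          rw [hM_def]; linarith
        have hc3 : κ ^ (2 * s) * M ≤ η * M := mul_le_mul_of_nonneg_right hκs hM.le
        have hc4 : η * M = (ε / 2) ^ 2 := by
          rw [hη_def]; field_simp
        nlinarith [hc1, hc2, hc3]
      calc (∑' n : ℤ, ‖f n‖ ^ 2 * (|(n : ℝ)| + κ) ^ (2 * s))
          ≤ κ ^ (2 * s) * (N + 1) ^ (-(2 * s)) * (∑' n, t n) + ∑' n, Sset.indicator t n := by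
            rw [← hb2]; exact hb1
        _ ≤ (ε / 2) ^ 2 + (ε / 2) ^ 2 := add_le_add hb3 hC
        _ ≤ ε ^ 2 := by nlinarith
    calc Real.sqrt (∑' n : ℤ, ‖f n‖ ^ 2 * (|(n : ℝ)| + κ) ^ (2 * s))
        ≤ Real.sqrt (ε ^ 2) := Real.sqrt_le_sqrt hfinal
      _ = ε := Real.sqrt_sq hε.le
  · -- κ-norm smallness → equicontinuity
    intro H ε hε
    have hε8 : (0 : ℝ) < ε / 8 := by linarith
    obtain ⟨K, hK1, hK⟩ := H (ε / 8) hε8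
    have hK0 : (0 : ℝ) < K := by linarith
    set c : ℝ := |B| + 1 with hc_def
    have hc1 : (1 : ℝ) ≤ c := by rw [hc_def]; linarith [abs_nonneg B]
    set δ : ℝ := ε / (8 * K * c) with hδ_def
    have hδ : 0 < δ := by positivity
    refine ⟨δ, hδ, ?_⟩
    intro f hf y hy
    have hsummable : Summable fun n : ℤ => ‖f n‖ ^ 2 * w n := (hbdd f hf).1
    have htsum : (∑' n : ℤ, ‖f n‖ ^ 2 * w n) ≤ B := (hbdd f hf).2
    have hB0 : (0 : ℝ) ≤ B :=
      le_trans (tsum_nonneg fun n => by positivity) htsum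
    set t : ℤ → ℝ := fun n => ‖f n‖ ^ 2 * w n with ht_def
    have ht_nonneg : ∀ n, 0 ≤ t n := fun n => by positivity
    -- κ-norm bound at κ = K
    have hsumK : Summable fun n : ℤ => ‖f n‖ ^ 2 * (|(n : ℝ)| + K) ^ (2 * s) := by
      refine Summable.of_nonneg_of_le (fun n => by positivity) (fun n => ?_) hsummable
      exact mul_le_mul_of_nonneg_left
        (Real.rpow_le_rpow_of_nonpos (by positivity) (by linarith) h2s.le) (by positivity)
    have hKnorm : (∑' n : ℤ, ‖f n‖ ^ 2 * (|(n : ℝ)| + K) ^ (2 * s)) ≤ (ε / 8) ^ 2 := by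
      have h1 := hK K le_rfl f hf
      have hS0 : 0 ≤ ∑' n : ℤ, ‖f n‖ ^ 2 * (|(n : ℝ)| + K) ^ (2 * s) :=
        tsum_nonneg fun n => by positivity
      calc (∑' n : ℤ, ‖f n‖ ^ 2 * (|(n : ℝ)| + K) ^ (2 * s))
          = Real.sqrt (∑' n : ℤ, ‖f n‖ ^ 2 * (|(n : ℝ)| + K) ^ (2 * s)) ^ 2 :=
            (Real.sq_sqrt hS0).symm
        _ ≤ (ε / 8) ^ 2 := pow_le_pow_left₀ (Real.sqrt_nonneg _) h1 2
    -- pointwise bound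
    have hper : ∀ n : ℤ, (2 - 2 * Real.cos ((n : ℝ) * y)) * t n
        ≤ K ^ 2 * y ^ 2 * t n + 16 * (‖f n‖ ^ 2 * (|(n : ℝ)| + K) ^ (2 * s)) := by
      intro n
      by_cases hn : |(n : ℝ)| ≤ K
      · have h1 : 2 - 2 * Real.cos ((n : ℝ) * y) ≤ ((n : ℝ) * y) ^ 2 := two_sub_two_cos_le _
        have h2 : ((n : ℝ) * y) ^ 2 ≤ K ^ 2 * y ^ 2 := by
          rw [mul_pow]
          have : (n : ℝ) ^ 2 ≤ K ^ 2 := by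
            rw [← _root_.sq_abs ((n : ℝ))]
            exact pow_le_pow_left₀ (abs_nonneg _) hn 2
          exact mul_le_mul_of_nonneg_right this (sq_nonneg y)
        have h3 : (2 - 2 * Real.cos ((n : ℝ) * y)) * t n ≤ K ^ 2 * y ^ 2 * t n :=
          mul_le_mul_of_nonneg_right (le_trans h1 h2) (ht_nonneg n)
        have h4 : 0 ≤ 16 * (‖f n‖ ^ 2 * (|(n : ℝ)| + K) ^ (2 * s)) := by positivity
        linarith
      · push_neg at hn
        have hw2 : w n ≤ 2 * (|(n : ℝ)| + K) ^ (2 * s) := by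
          have h1 : |(n : ℝ)| + K ≤ 2 * (|(n : ℝ)| + 1) := by linarith
          have h2 : (2 * (|(n : ℝ)| + 1)) ^ (2 * s) ≤ (|(n : ℝ)| + K) ^ (2 * s) :=
            Real.rpow_le_rpow_of_nonpos (by positivity) h1 h2s.le
          have h3 : (2 * (|(n : ℝ)| + 1)) ^ (2 * s)
              = 2 ^ (2 * s) * (|(n : ℝ)| + 1) ^ (2 * s) :=
            Real.mul_rpow (by norm_num) (by positivity)
          have h4 : (1 / 2 : ℝ) ≤ 2 ^ (2 * s) := by
            calc (1 / 2 : ℝ) = 2 ^ (-1 : ℝ) := by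
                  rw [Real.rpow_neg_one]; norm_num
              _ ≤ 2 ^ (2 * s) :=
                  Real.rpow_le_rpow_of_exponent_le (by norm_num) h2s'
          have h5 : (1 / 2 : ℝ) * (|(n : ℝ)| + 1) ^ (2 * s)
              ≤ 2 ^ (2 * s) * (|(n : ℝ)| + 1) ^ (2 * s) :=
            mul_le_mul_of_nonneg_right h4 (Real.rpow_nonneg (by positivity) _)
          have hwn : w n = (|(n : ℝ)| + 1) ^ (2 * s) := rfl
          rw [hwn]; linarith
        have h6 : (2 - 2 * Real.cos ((n : ℝ) * y)) * t n ≤ 4 * t n :=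
          mul_le_mul_of_nonneg_right (two_sub_two_cos_le_four _) (ht_nonneg n)
        have h7 : t n ≤ ‖f n‖ ^ 2 * (2 * (|(n : ℝ)| + K) ^ (2 * s)) := by
          rw [ht_def]
          exact mul_le_mul_of_nonneg_left hw2 (by positivity)
        have h8 : 0 ≤ K ^ 2 * y ^ 2 * t n := by positivity
        have h9 : 0 ≤ ‖f n‖ ^ 2 * (|(n : ℝ)| + K) ^ (2 * s) := by positivity
        nlinarith
    -- summability
    have hsum_lhs : Summable fun n : ℤ => (2 - 2 * Real.cos ((n : ℝ) * y)) * t n :=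
      Summable.of_nonneg_of_le
        (fun n => mul_nonneg (two_sub_two_cos_nonneg _) (ht_nonneg n))
        (fun n => mul_le_mul_of_nonneg_right (two_sub_two_cos_le_four _) (ht_nonneg n))
        (hsummable.mul_left 4)
    have hsum_rhs : Summable fun n : ℤ =>
        K ^ 2 * y ^ 2 * t n + 16 * (‖f n‖ ^ 2 * (|(n : ℝ)| + K) ^ (2 * s)) :=
      (hsummable.mul_left _).add (hsumK.mul_left 16)
    -- main estimate
    have hKy : K ^ 2 * y ^ 2 * B ≤ (ε / 8) ^ 2 := by
      have hyδ : y ^ 2 ≤ δ ^ 2 := by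
        have h := abs_le.mp hy.le
        exact sq_le_sq' h.1 h.2
      have e1 : K ^ 2 * y ^ 2 ≤ K ^ 2 * δ ^ 2 :=
        mul_le_mul_of_nonneg_left hyδ (sq_nonneg K)
      have e2 : K ^ 2 * δ ^ 2 = (ε / (8 * c)) ^ 2 := by
        rw [hδ_def]; field_simp
      have e3 : B ≤ c := by
        calc B ≤ |B| := le_abs_self B
          _ ≤ c := by rw [hc_def]; linarith
      calc K ^ 2 * y ^ 2 * B ≤ (ε / (8 * c)) ^ 2 * c := by
            refine mul_le_mul (by rw [← e2]; exact e1) e3 hB0 (by positivity)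
        _ = ε ^ 2 / (64 * c) := by field_simp; ring
        _ ≤ ε ^ 2 / 64 := by
            apply div_le_div_of_nonneg_left (sq_nonneg ε) (by norm_num) (by linarith)
        _ = (ε / 8) ^ 2 := by ring
    have hfinal : (∑' n : ℤ, (2 - 2 * Real.cos ((n : ℝ) * y)) * t n) ≤ ε ^ 2 := by
      calc (∑' n : ℤ, (2 - 2 * Real.cos ((n : ℝ) * y)) * t n)
          ≤ ∑' n : ℤ, (K ^ 2 * y ^ 2 * t n
              + 16 * (‖f n‖ ^ 2 * (|(n : ℝ)| + K) ^ (2 * s))) :=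
            Summable.tsum_le_tsum hper hsum_lhs hsum_rhs
        _ = K ^ 2 * y ^ 2 * (∑' n, t n)
              + 16 * ∑' n, ‖f n‖ ^ 2 * (|(n : ℝ)| + K) ^ (2 * s) := by
            rw [Summable.tsum_add (hsummable.mul_left _) (hsumK.mul_left 16), tsum_mul_left, tsum_mul_left]
        _ ≤ (ε / 8) ^ 2 + 16 * (ε / 8) ^ 2 := by
            refine add_le_add ?_ (by linarith [hKnorm])
            calc K ^ 2 * y ^ 2 * (∑' n, t n) ≤ K ^ 2 * y ^ 2 * B :=
                  mul_le_mul_of_nonneg_left htsum (by positivity)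
              _ ≤ (ε / 8) ^ 2 := hKy
        _ ≤ ε ^ 2 := by nlinarith
    have hrw : (∑' n : ℤ, ‖(Complex.exp (Complex.I * n * y) - 1) * f n‖ ^ 2
        * (|(n : ℝ)| + 1) ^ (2 * s)) = ∑' n : ℤ, (2 - 2 * Real.cos ((n : ℝ) * y)) * t n :=
      tsum_congr fun n => by rw [term_eq]; simp only [ht_def, hw_def]; ring
    rw [hrw]
    calc Real.sqrt (∑' n : ℤ, (2 - 2 * Real.cos ((n : ℝ) * y)) * t n)
        ≤ Real.sqrt (ε ^ 2) := Real.sqrt_le_sqrt hfinal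
      _ = ε := Real.sqrt_sq hε.le
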